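/- Let q ≥ 2 and m ≥ 1 be integers and let X be a random variable with values in [0,1) having a probability density function f. Suppose there are constants c_0, …, c_{q^m−1} such that f = c_j Lebesgue-almost everywhere on the interval [j·q^{−m}, (j+1)·q^{−m}) for each j = 0, 1, …, q^m − 1. Then for every n ≥ m, the random variable T^n(X) is uniformly distributed on [0,1). -/

import Mathlib

open MeasureTheory Set

/-- The base-`q` map `T(x) = q·x − ⌊q·x⌋`. -/
noncomputable def T (q : ℕ) : ℝ → ℝ := fun x => Int.fract ((q : ℝ) * x)

lemma fract_cast_mul_fract (a : ℕ) (y : ℝ) :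
    Int.fract ((a : ℝ) * Int.fract y) = Int.fract ((a : ℝ) * y) := by
  have h : (a : ℝ) * Int.fract y = (a : ℝ) * y - ((a * ⌊y⌋ : ℤ) : ℝ) := by
    rw [Int.fract]; push_cast; ring
  rw [h, Int.fract_sub_intCast]

lemma T_iterate (q : ℕ) (n : ℕ) (x : ℝ) :
    (T q)^[n + 1] x = Int.fract ((q : ℝ) ^ (n + 1) * x) := by
  induction n generalizing x with
  | zero => simp [T]
  | succ k ih =>
    rw [Function.iterate_succ_apply, ih (T q x)]
    show Int.fract ((q:ℝ)^(k+1) * Int.fract ((q:ℝ) * x)) = _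
    have : ((q^(k+1) : ℕ) : ℝ) = (q:ℝ)^(k+1) := by push_cast; ring
    rw [← this, fract_cast_mul_fract, this,
      show (q:ℝ)^(k+1) * ((q:ℝ) * x) = (q:ℝ)^(k+1+1) * x by ring]

lemma map_fract_restrict (N : ℕ) (hN : 0 < N) (j : ℕ) :
    Measure.map (fun x => Int.fract ((N : ℝ) * x))
      (volume.restrict (Ico ((j : ℝ) / N) (((j : ℝ) + 1) / N)))
    = ENNReal.ofReal (N : ℝ)⁻¹ • volume.restrict (Ico (0 : ℝ) 1) := by
  have hNR : (0 : ℝ) < N := by exact_mod_cast hN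
  have hNR' : (N : ℝ) ≠ 0 := ne_of_gt hNR
  set s : Set ℝ := Ico ((j : ℝ) / N) (((j : ℝ) + 1) / N) with hs
  have hae : (fun x => Int.fract ((N : ℝ) * x)) =ᵐ[volume.restrict s]
      (fun x => (N : ℝ) * x - j) := by
    filter_upwards [self_mem_ae_restrict measurableSet_Ico] with x hx
    have h1 : (j : ℝ) ≤ (N : ℝ) * x := by
      rw [mul_comm]; exact (div_le_iff₀ hNR).mp hx.1
    have h2 : (N : ℝ) * x < (j : ℝ) + 1 := by
      rw [mul_comm]; exact (lt_div_iff₀ hNR).mp hx.2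
    have : Int.fract ((N : ℝ) * x) = Int.fract ((N : ℝ) * x - (j : ℤ)) :=
      (Int.fract_sub_intCast _ _).symm
    rw [this, Int.fract_eq_self.mpr ⟨by push_cast; linarith, by push_cast; linarith⟩]
    push_cast; ring
  rw [Measure.map_congr hae]
  have hpre : ((fun x => (N : ℝ) * x - j) ⁻¹' (Ico (0:ℝ) 1)) = s := by
    ext x
    simp only [mem_preimage, mem_Ico, hs, sub_nonneg, sub_lt_iff_lt_add]
    constructor
    · rintro ⟨h1, h2⟩
      exact ⟨(div_le_iff₀ hNR).mpr (by linarith [mul_comm (N:ℝ) x]),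
        (lt_div_iff₀ hNR).mpr (by linarith [mul_comm (N:ℝ) x])⟩
    · rintro ⟨h1, h2⟩
      have h1' := (div_le_iff₀ hNR).mp h1
      have h2' := (lt_div_iff₀ hNR).mp h2
      constructor <;> nlinarith [mul_comm (N:ℝ) x]
  have hmeas : Measurable (fun x => (N : ℝ) * x - j) :=
    (measurable_const_mul _).sub measurable_const
  rw [← hpre, ← Measure.restrict_map hmeas measurableSet_Ico]
  have hcomp : (fun x => (N : ℝ) * x - j) = (· + (-(j:ℝ))) ∘ ((N : ℝ) * ·) := by
    ext x; simp [sub_eq_add_neg]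
  rw [hcomp, ← Measure.map_map (measurable_add_const _) (measurable_const_mul _),
    Real.map_volume_mul_left hNR', Measure.map_smul, map_add_right_eq_self,
    abs_of_pos (inv_pos.mpr hNR), Measure.restrict_smul]

lemma mapFinsetSum {α β ι : Type*} [MeasurableSpace α] [MeasurableSpace β]
    (t : Finset ι) (μ : ι → Measure α) {g : α → β} (hg : Measurable g) :
    (∑ i ∈ t, μ i).map g = ∑ i ∈ t, (μ i).map g := by
  classical
  induction t using Finset.induction with
  | empty => simp
  | insert _ _ h ih => rw [Finset.sum_insert h, Measure.map_add _ _ hg, ih, Finset.sum_insert h]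

theorem stmt2
    {Ω : Type*} [MeasurableSpace Ω] (ℙ : Measure Ω) [IsProbabilityMeasure ℙ]
    (q : ℕ) (hq : 2 ≤ q) (m : ℕ) (hm : 1 ≤ m)
    (f : ℝ → ℝ) (hf_meas : Measurable f) (hf_nonneg : ∀ x, 0 ≤ f x)
    (hf_supp : ∀ x, x ∉ Set.Ico (0:ℝ) 1 → f x = 0)
    (X : Ω → ℝ) (hX : Measurable X) (hXrange : ∀ ω, X ω ∈ Set.Ico (0:ℝ) 1)
    (hlaw : Measure.map X ℙ = volume.withDensity (fun x => ENNReal.ofReal (f x)))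
    -- `f` is a.e. constant `c j` on each interval `[j·q^{-m}, (j+1)·q^{-m})`
    (c : ℕ → ℝ)
    (hconst : ∀ j < q ^ m,
      ∀ᵐ x ∂(volume.restrict
        (Set.Ico ((j : ℝ) / (q : ℝ) ^ m) (((j : ℝ) + 1) / (q : ℝ) ^ m))), f x = c j)
    (n : ℕ) (hn : m ≤ n) :
    Measure.map (fun ω => (T q)^[n] (X ω)) ℙ = volume.restrict (Set.Ico (0:ℝ) 1) := by
  classical
  have hq0 : 0 < q := lt_of_lt_of_le two_pos hq
  set N : ℕ := q ^ n with hNdef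
  set d : ℕ := q ^ (n - m) with hddef
  have hN : 0 < N := pow_pos hq0 n
  have hd : 0 < d := pow_pos hq0 _
  have hNR : (0:ℝ) < N := by exact_mod_cast hN
  have hNsplit : N = q ^ m * d := by
    rw [hNdef, hddef, ← pow_add, Nat.add_sub_cancel' hn]
  set s : ℕ → Set ℝ := fun j => Ico ((j:ℝ)/N) (((j:ℝ)+1)/N) with hsdef
  set c' : ℕ → ℝ := fun j => c (j / d) with hc'def
  -- a.e. constancy on fine intervals
  have hconst' : ∀ j < N, ∀ᵐ x ∂(volume.restrict (s j)), f x = c' j := by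
    intro j hj
    set k := j / d with hk
    have hk_lt : k < q ^ m := (Nat.div_lt_iff_lt_mul hd).mpr (hNsplit ▸ hj)
    have h1 : d * k ≤ j := by
      rw [hk, mul_comm]; exact Nat.div_mul_le_self j d
    have h2 : j + 1 ≤ d * (k + 1) := by
      have h3 : d * (j / d) + j % d = j := Nat.div_add_mod j d
      have h4 : j % d < d := Nat.mod_lt j hd
      have h5 : j < d * (j / d) + d :=
        lt_of_le_of_lt (le_of_eq h3.symm) (Nat.add_lt_add_left h4 _)
      rw [hk, Nat.mul_succ]
      exact Nat.succ_le_of_lt h5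
    have hsub : s j ⊆ Ico ((k:ℝ)/(q:ℝ)^m) (((k:ℝ)+1)/(q:ℝ)^m) := by
      apply Ico_subset_Ico
      · rw [div_le_div_iff₀ (by positivity) hNR]
        have hnat : k * N ≤ j * q ^ m := by
          calc k * N = (d * k) * q ^ m := by rw [hNsplit]; ring
          _ ≤ j * q ^ m := Nat.mul_le_mul_right _ h1
        exact_mod_cast hnat
      · rw [div_le_div_iff₀ hNR (by positivity)]
        have hnat : (j + 1) * q ^ m ≤ (k + 1) * N := by
          calc (j + 1) * q ^ m ≤ (d * (k + 1)) * q ^ m := Nat.mul_le_mul_right _ h2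
          _ = (k + 1) * N := by rw [hNsplit]; ring
        exact_mod_cast hnat
    exact ae_restrict_of_ae_restrict_of_subset hsub (hconst k hk_lt)
  -- nonnegativity of the constants
  have hc'nn : ∀ j < N, 0 ≤ c' j := by
    intro j hj
    have hvol : volume (s j) ≠ 0 := by
      rw [hsdef]
      simp only [Real.volume_Ico]
      rw [show ((j:ℝ)+1)/N - (j:ℝ)/N = (N:ℝ)⁻¹ by field_simp; ring]
      simp only [ne_eq, ENNReal.ofReal_eq_zero, not_le]
      exact inv_pos.mpr hNR
    have hne : volume.restrict (s j) ≠ 0 := by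
      rw [Ne, Measure.restrict_eq_zero]; exact hvol
    haveI : (ae (volume.restrict (s j))).NeBot := ae_neBot.mpr hne
    obtain ⟨x, hx⟩ := (hconst' j hj).exists
    rw [← hx]; exact hf_nonneg x
  -- each fine interval sits inside [0,1)
  have hsub01 : ∀ j < N, s j ⊆ Ico (0:ℝ) 1 := by
    intro j hj
    apply Ico_subset_Ico (by positivity)
    rw [div_le_one hNR]
    exact_mod_cast Nat.succ_le_of_lt hj
  -- [0,1) is covered by the fine intervals
  have hUnion : ∀ x ∈ Ico (0:ℝ) 1, ∃ j, j < N ∧ x ∈ s j := by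
    intro x hx
    have hx0 : (0:ℝ) ≤ (N:ℝ) * x := mul_nonneg hNR.le hx.1
    refine ⟨⌊(N:ℝ)*x⌋₊, ?_, ?_, ?_⟩
    · exact (Nat.floor_lt hx0).mpr (by nlinarith [hx.2])
    · have := Nat.floor_le hx0
      rw [div_le_iff₀ hNR]; nlinarith
    · have := Nat.lt_floor_add_one ((N:ℝ)*x)
      rw [lt_div_iff₀ hNR]; nlinarith
  -- disjointness
  have hdisj : ∀ i j : ℕ, i ≠ j → Disjoint (s i) (s j) := by
    have key : ∀ i j : ℕ, i < j → Disjoint (s i) (s j) := by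
      intro i j hij
      simp only [hsdef, Set.Ico_disjoint_Ico]
      refine le_trans (min_le_left _ _) (le_trans ?_ (le_max_right _ _))
      gcongr
      exact_mod_cast hij
    intro i j hij
    rcases lt_or_gt_of_ne hij with h | h
    · exact key i j h
    · exact (key j i h).symm
  -- a.e. identification of the density with a step function
  set F : ℝ → ENNReal := fun x =>
    ∑ j ∈ Finset.range N, (s j).indicator (fun _ => ENNReal.ofReal (c' j)) x with hFdef
  have hfF : (fun x => ENNReal.ofReal (f x)) =ᵐ[volume] F := by
    have hae : ∀ᵐ x ∂(volume : Measure ℝ), ∀ j ∈ Finset.range N, x ∈ s j → f x = c' j := by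
      rw [Filter.eventually_all_finset]
      intro j hj
      exact (ae_restrict_iff' measurableSet_Ico).mp (hconst' j (Finset.mem_range.mp hj))
    filter_upwards [hae] with x hx
    by_cases hx0 : x ∈ Ico (0:ℝ) 1
    · obtain ⟨j, hjN, hxj⟩ := hUnion x hx0
      rw [hx j (Finset.mem_range.mpr hjN) hxj]
      simp only [hFdef]
      rw [Finset.sum_eq_single_of_mem j (Finset.mem_range.mpr hjN)]
      · rw [indicator_of_mem hxj]
      · intro i _ hij
        exact indicator_of_notMem
          (fun hxi => Set.disjoint_left.mp (hdisj i j hij) hxi hxj) _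
    · rw [hf_supp x hx0]
      simp only [hFdef]
      rw [Finset.sum_eq_zero (fun i hi => indicator_of_notMem
        (fun hxi => hx0 (hsub01 i (Finset.mem_range.mp hi) hxi)) _)]
      simp
  -- decomposition of the law of X
  have hdecomp : volume.withDensity (fun x => ENNReal.ofReal (f x))
      = ∑ j ∈ Finset.range N, ENNReal.ofReal (c' j) • volume.restrict (s j) := by
    rw [withDensity_congr_ae hfF]
    have h1 : volume.withDensity F = ∑ j ∈ Finset.range N,
        volume.withDensity ((s j).indicator fun _ => ENNReal.ofReal (c' j)) := by
      ext A hA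
      rw [withDensity_apply _ hA, Measure.finset_sum_apply]
      simp only [hFdef]
      rw [lintegral_finset_sum _ (fun j _ => measurable_const.indicator measurableSet_Ico)]
      exact Finset.sum_congr rfl (fun j _ => (withDensity_apply _ hA).symm)
    rw [h1]
    refine Finset.sum_congr rfl (fun j _ => ?_)
    rw [withDensity_indicator measurableSet_Ico, withDensity_const]
  -- express the iterated map as x ↦ fract (N x)
  set g : ℝ → ℝ := fun x => Int.fract ((N:ℝ) * x) with hgdef
  have hgmeas : Measurable g := Measurable.fract (measurable_const_mul _)
  have hTg : (fun ω => (T q)^[n] (X ω)) = g ∘ X := by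
    funext ω
    obtain ⟨n', rfl⟩ : ∃ n', n = n' + 1 :=
      ⟨n - 1, (Nat.succ_pred_eq_of_pos (lt_of_lt_of_le hm hn)).symm⟩
    simp only [Function.comp_apply, hgdef]
    rw [T_iterate]
    norm_cast
  -- assemble
  have hterm : ∀ j ∈ Finset.range N,
      (ENNReal.ofReal (c' j) • volume.restrict (s j)).map g
        = (ENNReal.ofReal (c' j) * ENNReal.ofReal (N:ℝ)⁻¹)
            • volume.restrict (Ico (0:ℝ) 1) := by
    intro j _
    rw [Measure.map_smul, hgdef, hsdef, map_fract_restrict N hN j, smul_smul]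
  have hEq : Measure.map (fun ω => (T q)^[n] (X ω)) ℙ
      = (∑ j ∈ Finset.range N, ENNReal.ofReal (c' j) * ENNReal.ofReal (N:ℝ)⁻¹)
          • volume.restrict (Ico (0:ℝ) 1) := by
    rw [hTg, ← Measure.map_map hgmeas hX, hlaw, hdecomp, mapFinsetSum _ _ hgmeas,
      Finset.sum_congr rfl hterm, ← Finset.sum_smul]
  have hmap1 : Measure.map (fun ω => (T q)^[n] (X ω)) ℙ univ = 1 := by
    rw [Measure.map_apply (hTg ▸ hgmeas.comp hX) MeasurableSet.univ]
    simp
  have huuniv : volume.restrict (Ico (0:ℝ) 1) univ = 1 := by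
    rw [Measure.restrict_apply_univ, Real.volume_Ico]
    norm_num
  have hk : (∑ j ∈ Finset.range N, ENNReal.ofReal (c' j) * ENNReal.ofReal (N:ℝ)⁻¹) = 1 := by
    rw [hEq] at hmap1
    rwa [Measure.smul_apply, huuniv, smul_eq_mul, mul_one] at hmap1
  rw [hEq, hk, one_smul]
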